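/- Let c > 0 and γ ≥ 1 be reals. The function f(α) := (1−α)·ln((1−α)/(c·(1−γα))) is convex on the interval [0, 1/γ). -/
import Mathlib

/-- The function `α ↦ (1−α)·ln((1−α)/(c(1−γα)))` is convex on `[0, 1/γ)`. -/
theorem objective_convex
    (c γ : ℝ) (hc : 0 < c) (hγ : 1 ≤ γ) :
    ConvexOn ℝ (Set.Ico (0 : ℝ) (1 / γ))
      (fun α => (1 - α) * Real.log ((1 - α) / (c * (1 - γ * α)))) := by
  have hγ0 : 0 < γ := lt_of_lt_of_le one_pos hγ
  -- positivity facts on the (half-open) interval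
  have key : ∀ α ∈ Set.Ico (0:ℝ) (1/γ), 0 < 1 - γ * α ∧ 0 < 1 - α := by
    intro α hα
    obtain ⟨h0, h1⟩ := hα
    have hγα : γ * α < 1 := by
      have := (lt_div_iff₀ hγ0).mp h1
      linarith [this]
    constructor
    · linarith
    · have : α < 1 := by
        calc α < 1 / γ := h1
          _ ≤ 1 := by rw [div_le_one hγ0]; exact hγ
      linarith
  set f' : ℝ → ℝ := fun α => -(Real.log ((1 - α) / (c * (1 - γ * α)))) + (γ - 1) / (1 - γ * α)
    with hf'def
  set f'' : ℝ → ℝ := fun α => (γ - 1)^2 / ((1 - α) * (1 - γ * α)^2) with hf''def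
  have hint : interior (Set.Ico (0:ℝ) (1/γ)) = Set.Ioo 0 (1/γ) := interior_Ico
  have hconv : Convex ℝ (Set.Ico (0:ℝ) (1/γ)) := convex_Ico _ _
  refine convexOn_of_hasDerivWithinAt2_nonneg hconv ?_ (f' := f') (f'' := f'') ?_ ?_ ?_
  · -- continuity
    apply ContinuousOn.mul
    · fun_prop
    · apply ContinuousOn.log
      · apply ContinuousOn.div
        · fun_prop
        · fun_prop
        · intro x hx
          have := (key x hx).1
          positivity
      · intro x hx
        obtain ⟨h1, h2⟩ := key x hx
        positivity
  · -- first derivative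
    rw [hint]
    intro x hx
    obtain ⟨h1, h2⟩ := key x (Set.Ioo_subset_Ico_self hx)
    have hd1 : HasDerivAt (fun α : ℝ => 1 - α) (-1) x := by
      simpa using (hasDerivAt_id x).const_sub 1
    have hd2 : HasDerivAt (fun α : ℝ => c * (1 - γ * α)) (c * (-γ)) x := by
      have : HasDerivAt (fun α : ℝ => 1 - γ * α) (-γ) x := by
        simpa using ((hasDerivAt_id x).const_mul γ).const_sub 1
      simpa using this.const_mul c
    have hden : c * (1 - γ * x) ≠ 0 := by positivity
    have hq : HasDerivAt (fun α : ℝ => (1 - α) / (c * (1 - γ * α)))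
        (((-1) * (c * (1 - γ * x)) - (1 - x) * (c * (-γ))) / (c * (1 - γ * x))^2) x :=
      hd1.div hd2 hden
    have hqpos : (0:ℝ) < (1 - x) / (c * (1 - γ * x)) := by positivity
    have hlog := hq.log (ne_of_gt hqpos)
    have := hd1.mul hlog
    have heq : (-1) * Real.log ((1 - x) / (c * (1 - γ * x))) +
        (1 - x) * ((((-1) * (c * (1 - γ * x)) - (1 - x) * (c * (-γ))) / (c * (1 - γ * x))^2) /
          ((1 - x) / (c * (1 - γ * x)))) = f' x := by
      rw [hf'def]
      have hc' : c ≠ 0 := ne_of_gt hc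
      have h2' : (1:ℝ) - γ * x ≠ 0 := ne_of_gt h1
      have h1' : (1:ℝ) - x ≠ 0 := ne_of_gt h2
      field_simp
      ring
    rw [heq] at this
    exact this.hasDerivWithinAt
  · -- second derivative
    rw [hint]
    intro x hx
    obtain ⟨h1, h2⟩ := key x (Set.Ioo_subset_Ico_self hx)
    have hd1 : HasDerivAt (fun α : ℝ => 1 - α) (-1) x := by
      simpa using (hasDerivAt_id x).const_sub 1
    have hd2 : HasDerivAt (fun α : ℝ => c * (1 - γ * α)) (c * (-γ)) x := by
      have : HasDerivAt (fun α : ℝ => 1 - γ * α) (-γ) x := by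
        simpa using ((hasDerivAt_id x).const_mul γ).const_sub 1
      simpa using this.const_mul c
    have hd3 : HasDerivAt (fun α : ℝ => 1 - γ * α) (-γ) x := by
      simpa using ((hasDerivAt_id x).const_mul γ).const_sub 1
    have hden : c * (1 - γ * x) ≠ 0 := by positivity
    have hq : HasDerivAt (fun α : ℝ => (1 - α) / (c * (1 - γ * α)))
        (((-1) * (c * (1 - γ * x)) - (1 - x) * (c * (-γ))) / (c * (1 - γ * x))^2) x :=
      hd1.div hd2 hden
    have hqpos : (0:ℝ) < (1 - x) / (c * (1 - γ * x)) := by positivity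
    have hlog := hq.log (ne_of_gt hqpos)
    have hinv : HasDerivAt (fun α : ℝ => (γ - 1) / (1 - γ * α))
        ((0 * (1 - γ * x) - (γ - 1) * (-γ)) / (1 - γ * x)^2) x :=
      (hasDerivAt_const x (γ - 1)).div hd3 (ne_of_gt h1)
    have := hlog.neg.add hinv
    have heq : -((((-1) * (c * (1 - γ * x)) - (1 - x) * (c * (-γ))) / (c * (1 - γ * x))^2) /
          ((1 - x) / (c * (1 - γ * x)))) +
        (0 * (1 - γ * x) - (γ - 1) * (-γ)) / (1 - γ * x)^2 = f'' x := by
      rw [hf''def]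
      have hc' : c ≠ 0 := ne_of_gt hc
      have h2' : (1:ℝ) - γ * x ≠ 0 := ne_of_gt h1
      have h1' : (1:ℝ) - x ≠ 0 := ne_of_gt h2
      field_simp
      ring
    rw [heq] at this
    exact this.hasDerivWithinAt
  · rw [hint]
    intro x hx
    obtain ⟨h1, h2⟩ := key x (Set.Ioo_subset_Ico_self hx)
    rw [hf''def]
    positivity
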